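/- Let D be the unique ℚ-linear derivation of the polynomial ring ℚ[x,y] satisfying D(x) = xy and D(y) = xy. Then for every n ≥ 1, D^n(x) = Σ_{m=1}^{n} A(n,m) x^m y^{n+1-m}, where A(n,m) denotes the number of permutations of [n] with exactly m-1 ascents. -/

import Mathlib

open MvPolynomial

/-- The number of ascents of a permutation of `[n]`, viewing the permutation as the
word `π 0, π 1, …, π (n-1)`: indices `i` with `1 ≤ i ≤ n-1` and `π i < π (i+1)`
(0-indexed), counted via consecutive pairs. -/
def ascents {n : ℕ} (π : Equiv.Perm (Fin n)) : ℕ :=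
  ((List.ofFn fun i => (π i : ℕ)).zip (List.ofFn fun i => (π i : ℕ)).tail).countP
    fun p => decide (p.1 < p.2)

/-- `eulerianA n m` is the number of permutations of `[n]` with exactly `m - 1` ascents. -/
noncomputable def eulerianA (n m : ℕ) : ℕ :=
  Nat.card {π : Equiv.Perm (Fin n) // ascents π = m - 1}

/-- ascent count of a list of naturals -/
def ca (l : List ℕ) : ℕ := (l.zip l.tail).countP fun p => decide (p.1 < p.2)

@[simp] lemma ca_nil : ca [] = 0 := rfl
@[simp] lemma ca_single (x : ℕ) : ca [x] = 0 := rfl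
@[simp] lemma ca_cons_cons (x y : ℕ) (t : List ℕ) :
    ca (x :: y :: t) = (if x < y then 1 else 0) + ca (y :: t) := by
  simp only [ca, List.tail_cons, List.zip_cons_cons, List.countP_cons, decide_eq_true_eq]
  split <;> omega

lemma ca_le (l : List ℕ) : ca l + 1 ≤ l.length ∨ l.length = 0 := by
  match l with
  | [] => simp
  | [x] => simp [ca]
  | x :: y :: t =>
    left
    have := ca_le (y :: t)
    simp [ca_cons_cons] at this ⊢
    split <;> omega

/-- whether inserting a max at position j keeps the ascent count -/
def icond (l : List ℕ) (j : ℕ) : Prop := j = 0 ∨ (j < l.length ∧ l[j-1]! < l[j]!)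

instance (l : List ℕ) (j : ℕ) : Decidable (icond l j) := by unfold icond; infer_instance

lemma ca_insertIdx (M : ℕ) : ∀ (l : List ℕ) (j : ℕ), (∀ v ∈ l, v < M) → j ≤ l.length →
    ca (List.insertIdx l j M) = ca l + (if icond l j then 0 else 1)
  | l, 0, hM, _ => by
    match l with
    | [] => simp [icond, ca]
    | x :: t =>
      rw [List.insertIdx_zero, ca_cons_cons, if_neg (by have := hM x (by simp); omega),
        if_pos (show icond (x :: t) 0 from Or.inl rfl)]
      omega
  | [], j + 1, hM, hj => by simp at hj
  | [x], j + 1, hM, hj => by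
    have : j = 0 := by simpa using hj
    subst this
    simp [ca, icond, List.insertIdx, hM x (by simp)]
  | x :: y :: t, 1, hM, hj => by
    have hx : x < M := hM x (by simp)
    rw [show List.insertIdx (x :: y :: t) 1 M = x :: M :: y :: t from rfl]
    rw [ca_cons_cons, ca_cons_cons, ca_cons_cons, if_pos hx]
    have hy : y < M := hM y (by simp)
    have hcond : icond (x :: y :: t) 1 ↔ x < y := by
      simp [icond]
    rw [if_neg (by omega)]
    by_cases h : x < y
    · rw [if_pos h, if_pos (hcond.mpr h)]; omega
    · rw [if_neg h, if_neg (fun hh => h (hcond.mp hh))]; omega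
  | x :: y :: t, j + 2, hM, hj => by
    have hM' : ∀ v ∈ y :: t, v < M := fun v hv => hM v (by simp [hv])
    have hj' : j + 1 ≤ (y :: t).length := by simpa using hj
    have IH := ca_insertIdx M (y :: t) (j + 1) hM' hj'
    rw [List.insertIdx_succ_cons, ca_cons_cons]
    have hhead : ∀ z t', List.insertIdx (z :: t') (j+1) M = z :: List.insertIdx t' j M :=
      fun z t' => List.insertIdx_succ_cons
    rw [hhead] at IH ⊢
    rw [ca_cons_cons]
    have hcond : icond (x :: y :: t) (j + 2) ↔ icond (y :: t) (j + 1) := by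
      simp only [icond, List.length_cons]
      constructor
      · rintro (h | ⟨h1, h2⟩)
        · omega
        · right
          refine ⟨by omega, ?_⟩
          have e1 : (x :: y :: t)[j+2-1]! = (y :: t)[j+1-1]! := by
            simp [List.getElem!_cons_succ]
          have e2 : (x :: y :: t)[j+2]! = (y :: t)[j+1]! := by
            simp [List.getElem!_cons_succ]
          rwa [e1, e2] at h2
      · rintro (h | ⟨h1, h2⟩)
        · omega
        · right
          refine ⟨by omega, ?_⟩
          have e1 : (x :: y :: t)[j+2-1]! = (y :: t)[j+1-1]! := by
            simp [List.getElem!_cons_succ]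
          have e2 : (x :: y :: t)[j+2]! = (y :: t)[j+1]! := by
            simp [List.getElem!_cons_succ]
          rw [e1, e2]; exact h2
    rw [IH]
    by_cases h : icond (y :: t) (j + 1)
    · rw [if_pos h, if_pos (hcond.mpr h)]; omega
    · rw [if_neg h, if_neg (fun hh => h (hcond.mp hh))]; omega

lemma ca_eq_countP : ∀ l : List ℕ,
    ca l = (List.range l.length).countP (fun j => decide (j + 1 < l.length ∧ l[j]! < l[j+1]!))
  | [] => rfl
  | [x] => rfl
  | x :: y :: t => by
    have IH := ca_eq_countP (y :: t)
    simp only [List.length_cons] at IH ⊢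
    rw [ca_cons_cons, IH]
    have hc : ((fun j => decide (j + 1 < t.length + 1 + 1 ∧
        (x :: y :: t)[j]! < (x :: y :: t)[j+1]!)) ∘ Nat.succ) =
        (fun j => decide (j + 1 < t.length + 1 ∧ (y :: t)[j]! < (y :: t)[j+1]!)) := by
      funext j
      simp only [Function.comp_apply, decide_eq_decide, Nat.succ_eq_add_one]
      constructor
      · rintro ⟨h1, h2⟩
        exact ⟨by omega, by simpa [List.getElem!_cons_succ] using h2⟩
      · rintro ⟨h1, h2⟩
        exact ⟨by omega, by simpa [List.getElem!_cons_succ] using h2⟩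
    have h0 : decide (0 + 1 < t.length + 1 + 1 ∧ (x :: y :: t)[0]! < (x :: y :: t)[0+1]!)
        = decide (x < y) := by
      rw [decide_eq_decide]
      simp [List.getElem!_cons_succ, List.getElem!_cons_zero]
    have hr : (List.range (t.length + 1 + 1)).countP (fun j => decide (j + 1 < t.length + 1 + 1 ∧
        (x :: y :: t)[j]! < (x :: y :: t)[j+1]!)) =
        (List.range (t.length + 1)).countP (fun j => decide (j + 1 < t.length + 1 ∧
        (y :: t)[j]! < (y :: t)[j+1]!)) + (if x < y then 1 else 0) := by
      rw [List.range_succ_eq_map, List.countP_cons, List.countP_map, hc, h0]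
      by_cases h : x < y <;> simp [h]
    rw [hr]
    by_cases h : x < y <;> simp [h, Nat.add_comm]

lemma countP_icond (l : List ℕ) :
    (List.range (l.length + 1)).countP (fun j => decide (icond l j)) = ca l + 1 := by
  rw [List.range_succ_eq_map, List.countP_cons, List.countP_map]
  have h0 : decide (icond l 0) = true := by simp [icond]
  rw [h0]
  have hc : ((fun j => decide (icond l j)) ∘ Nat.succ) =
      (fun j => decide (j + 1 < l.length ∧ l[j]! < l[j+1]!)) := by
    funext j
    simp only [Function.comp_apply, icond, Nat.succ_eq_add_one, decide_eq_decide]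
    refine decide_eq_decide.mpr ?_
    constructor
    · rintro (h | ⟨h1, h2⟩)
      · omega
      · exact ⟨h1, by simpa using h2⟩
    · rintro ⟨h1, h2⟩
      exact Or.inr ⟨h1, by simpa using h2⟩
  rw [hc, ← ca_eq_countP]
  simp

lemma ca_le_length (l : List ℕ) : ca l ≤ l.length := by
  rcases ca_le l with h | h
  · omega
  · rw [List.length_eq_zero_iff.mp h]
    simp

lemma card_filter_range (m : ℕ) (p : ℕ → Prop) [DecidablePred p] :
    ((Finset.range m).filter p).card = (List.range m).countP (fun x => decide (p x)) := by
  induction m with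
  | zero => simp
  | succ m IH =>
    rw [Finset.range_add_one, List.range_succ, List.countP_append, Finset.filter_insert]
    by_cases h : p m
    · rw [if_pos h, Finset.card_insert_of_notMem (by simp)]
      simp [h, IH]
    · rw [if_neg h]
      simp [h, IH]

lemma sum_insertIdx {A : Type*} [AddCommMonoid A] (F : ℕ → A) (l : List ℕ) (M : ℕ)
    (hM : ∀ v ∈ l, v < M) :
    ∑ j ∈ Finset.range (l.length + 1), F (ca (List.insertIdx l j M)) =
      (ca l + 1) • F (ca l) + (l.length - ca l) • F (ca l + 1) := by
  have h1 : ∀ j ∈ Finset.range (l.length + 1),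
      F (ca (List.insertIdx l j M)) = if icond l j then F (ca l) else F (ca l + 1) := by
    intro j hj
    rw [ca_insertIdx M l j hM (by simpa using Nat.lt_succ_iff.mp (Finset.mem_range.mp hj))]
    split <;> simp
  rw [Finset.sum_congr rfl h1, Finset.sum_ite, Finset.sum_const, Finset.sum_const]
  have hcard : ((Finset.range (l.length + 1)).filter (fun j => icond l j)).card = ca l + 1 := by
    rw [card_filter_range, countP_icond]
  have hcard2 : ((Finset.range (l.length + 1)).filter (fun j => ¬ icond l j)).card
      = l.length - ca l := by
    have h2 := Finset.card_filter_add_card_filter_not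
      (s := Finset.range (l.length + 1)) (p := fun j => icond l j)
    rw [Finset.card_range, hcard] at h2
    have := ca_le_length l
    omega
  rw [hcard, hcard2]

/-- insert the maximum at position `j` -/
def pins {k : ℕ} (j : Fin (k + 2)) (τ : Equiv.Perm (Fin (k + 1))) : Equiv.Perm (Fin (k + 2)) :=
  ((finSuccEquiv' j).trans τ.optionCongr).trans finSuccEquivLast.symm

lemma pins_self {k : ℕ} (j : Fin (k + 2)) (τ : Equiv.Perm (Fin (k + 1))) :
    pins j τ j = Fin.last (k + 1) := by
  simp [pins, finSuccEquiv'_at]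

lemma pins_succAbove {k : ℕ} (j : Fin (k + 2)) (τ : Equiv.Perm (Fin (k + 1))) (i : Fin (k + 1)) :
    pins j τ (j.succAbove i) = (τ i).castSucc := by
  simp [pins, finSuccEquiv'_succAbove]

lemma pins_injective {k : ℕ} :
    Function.Injective (fun p : Fin (k + 2) × Equiv.Perm (Fin (k + 1)) => pins p.1 p.2) := by
  rintro ⟨j, τ⟩ ⟨j', τ'⟩ h
  simp only at h
  have hj : j = j' := by
    by_contra hne
    obtain ⟨i, hi⟩ := Fin.exists_succAbove_eq hne
    have h1 : pins j τ j = Fin.last (k + 1) := pins_self j τ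
    have h2 : pins j' τ' j = (τ' i).castSucc := by rw [← hi, pins_succAbove]
    rw [h, h2] at h1
    exact absurd h1 (Fin.castSucc_lt_last (τ' i)).ne
  subst hj
  have hτ : τ = τ' := by
    apply Equiv.ext
    intro i
    have := congrArg (fun e : Equiv.Perm (Fin (k+2)) => e (j.succAbove i)) h
    simpa [pins_succAbove, Fin.castSucc_inj] using this
  rw [hτ]

def W {m : ℕ} (σ : Equiv.Perm (Fin m)) : List ℕ := List.ofFn fun i => (σ i : ℕ)

lemma ascents_eq_ca {m : ℕ} (σ : Equiv.Perm (Fin m)) : ascents σ = ca (W σ) := rfl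

@[simp] lemma W_length {m : ℕ} (σ : Equiv.Perm (Fin m)) : (W σ).length = m := by
  simp [W]

lemma W_lt {m : ℕ} (σ : Equiv.Perm (Fin m)) : ∀ v ∈ W σ, v < m := by
  intro v hv
  simp only [W, List.mem_ofFn] at hv
  obtain ⟨i, rfl⟩ := hv
  exact (σ i).isLt

lemma ascents_le {k : ℕ} (σ : Equiv.Perm (Fin (k + 1))) : ascents σ ≤ k := by
  rw [ascents_eq_ca]
  rcases ca_le (W σ) with h | h <;> simp [W_length] at h <;> omega

lemma W_pins {k : ℕ} (j : Fin (k + 2)) (τ : Equiv.Perm (Fin (k + 1))) :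
    W (pins j τ) = List.insertIdx (W τ) (j : ℕ) (k + 1) := by
  have hjle : (j : ℕ) ≤ (W τ).length := by simp; omega
  apply List.ext_getElem
  · rw [List.length_insertIdx_of_le_length hjle]; simp
  intro p hp hp'
  have hp2 : p < k + 2 := by simpa using hp
  rcases lt_trichotomy p (j : ℕ) with hlt | heq | hgt
  · rw [List.getElem_insertIdx_of_lt hlt hp']
    have hpk : p < k + 1 := by omega
    have hsa : j.succAbove ⟨p, hpk⟩ = ⟨p, hp2⟩ := by
      rw [Fin.succAbove_of_castSucc_lt]
      · rfl
      · simp [Fin.lt_def]; omega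
    simp only [W, List.getElem_ofFn]
    rw [show (⟨p, by simpa using hp⟩ : Fin (k+2)) = j.succAbove ⟨p, hpk⟩ from by
      rw [hsa], pins_succAbove]
    simp
  · subst heq
    rw [List.getElem_insertIdx_self]
    simp only [W, List.getElem_ofFn]
    rw [show (⟨(j:ℕ), by simpa using hp⟩ : Fin (k+2)) = j from by ext; rfl, pins_self]
    simp
  · obtain ⟨d, hd⟩ : ∃ d, p = (j : ℕ) + d + 1 := ⟨p - j - 1, by omega⟩
    subst hd
    have hdk : (j : ℕ) + d < k + 1 := by omega
    rw [List.getElem_insertIdx_add_succ _ _ _ _ (by simpa using hdk)]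
    have hsa : j.succAbove ⟨(j:ℕ) + d, hdk⟩ = ⟨(j:ℕ) + d + 1, hp2⟩ := by
      rw [Fin.succAbove_of_le_castSucc]
      · rfl
      · simp [Fin.le_def]
    simp only [W, List.getElem_ofFn]
    rw [show (⟨(j:ℕ) + d + 1, by simpa using hp⟩ : Fin (k+2)) = j.succAbove ⟨(j:ℕ)+d, hdk⟩ from by
      rw [hsa], pins_succAbove]
    simp


lemma Dstep (D : Derivation ℚ (MvPolynomial (Fin 2) ℚ) (MvPolynomial (Fin 2) ℚ))
    (hx : D (X 0) = X 0 * X 1) (hy : D (X 1) = X 0 * X 1) (a b : ℕ) :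
    D ((X 0 : MvPolynomial (Fin 2) ℚ) ^ (a + 1) * X 1 ^ (b + 1)) =
      (a + 1) • ((X 0 : MvPolynomial (Fin 2) ℚ) ^ (a + 1) * X 1 ^ (b + 2)) +
      (b + 1) • ((X 0 : MvPolynomial (Fin 2) ℚ) ^ (a + 2) * X 1 ^ (b + 1)) := by
  rw [Derivation.leibniz, Derivation.leibniz_pow, Derivation.leibniz_pow, hx, hy]
  simp only [Nat.add_sub_cancel, smul_eq_mul, nsmul_eq_mul]
  push_cast
  ring

lemma key (D : Derivation ℚ (MvPolynomial (Fin 2) ℚ) (MvPolynomial (Fin 2) ℚ))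
    (hx : D (X 0) = X 0 * X 1) (hy : D (X 1) = X 0 * X 1) :
    ∀ k : ℕ, (⇑D)^[k + 1] (X 0) =
      ∑ σ : Equiv.Perm (Fin (k + 1)),
        (X 0 : MvPolynomial (Fin 2) ℚ) ^ (ascents σ + 1) * X 1 ^ (k + 1 - ascents σ)
  | 0 => by
    rw [Function.iterate_one, hx]
    have h0 : ∀ σ : Equiv.Perm (Fin 1), ascents σ = 0 := fun σ => Nat.le_zero.mp (ascents_le σ)
    rw [Finset.sum_congr rfl (fun σ _ => by rw [h0 σ])]
    rw [Finset.sum_const, Finset.card_univ]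
    simp [Fintype.card_perm]
  | (k + 1) => by
    have IH := key D hx hy k
    have hbij : Function.Bijective
        (fun p : Fin (k + 2) × Equiv.Perm (Fin (k + 1)) => pins p.1 p.2) := by
      rw [Fintype.bijective_iff_injective_and_card]
      exact ⟨pins_injective, by simp [Fintype.card_perm, Nat.factorial_succ]⟩
    have hRHS : (∑ σ : Equiv.Perm (Fin (k + 2)),
          (X 0 : MvPolynomial (Fin 2) ℚ) ^ (ascents σ + 1) * X 1 ^ (k + 2 - ascents σ))
        = ∑ τ : Equiv.Perm (Fin (k + 1)),
            ((ascents τ + 1) •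
              ((X 0 : MvPolynomial (Fin 2) ℚ) ^ (ascents τ + 1) * X 1 ^ (k + 2 - ascents τ)) +
             (k + 1 - ascents τ) •
              ((X 0 : MvPolynomial (Fin 2) ℚ) ^ (ascents τ + 1 + 1) *
                X 1 ^ (k + 2 - (ascents τ + 1)))) := by
      rw [← Fintype.sum_bijective _ hbij _ _ (fun p => rfl)]
      rw [Fintype.sum_prod_type_right]
      refine Finset.sum_congr rfl (fun τ _ => ?_)
      have hterm : ∀ j : Fin (k + 2),
          (X 0 : MvPolynomial (Fin 2) ℚ) ^ (ascents (pins j τ) + 1) *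
              X 1 ^ (k + 2 - ascents (pins j τ))
          = (fun c => (X 0 : MvPolynomial (Fin 2) ℚ) ^ (c + 1) * X 1 ^ (k + 2 - c))
              (ca (List.insertIdx (W τ) (j : ℕ) (k + 1))) := by
        intro j
        rw [ascents_eq_ca, W_pins]
      rw [Finset.sum_congr rfl (fun j _ => hterm j)]
      rw [Fin.sum_univ_eq_sum_range
        (fun j => (fun c => (X 0 : MvPolynomial (Fin 2) ℚ) ^ (c + 1) * X 1 ^ (k + 2 - c))
          (ca (List.insertIdx (W τ) j (k + 1)))) (k + 2)]
      have hran : Finset.range (k + 2) = Finset.range ((W τ).length + 1) := by simp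
      rw [hran, sum_insertIdx
        (fun c => (X 0 : MvPolynomial (Fin 2) ℚ) ^ (c + 1) * X 1 ^ (k + 2 - c))
        (W τ) (k + 1) (W_lt τ), ← ascents_eq_ca, W_length]
    rw [Function.iterate_succ_apply', IH, map_sum, hRHS]
    refine Finset.sum_congr rfl (fun τ _ => ?_)
    have ha : ascents τ ≤ k := ascents_le τ
    have h1 : k + 1 - ascents τ = (k - ascents τ) + 1 := by omega
    have h2 : k + 1 + 1 - ascents τ = (k - ascents τ) + 2 := by omega
    have h3 : k + 1 + 1 - (ascents τ + 1) = (k - ascents τ) + 1 := by omega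
    have h4 : ascents τ + 1 + 1 = ascents τ + 2 := by omega
    rw [h1, h2, h3, h4]
    exact Dstep D hx hy (ascents τ) (k - ascents τ)

theorem stmt0
    (D : Derivation ℚ (MvPolynomial (Fin 2) ℚ) (MvPolynomial (Fin 2) ℚ))
    (hx : D (X 0) = X 0 * X 1) (hy : D (X 1) = X 0 * X 1)
    (n : ℕ) (hn : 1 ≤ n) :
    (⇑D)^[n] (X 0) =
      ∑ m ∈ Finset.Icc 1 n,
        (eulerianA n m : MvPolynomial (Fin 2) ℚ) * X 0 ^ m * X 1 ^ (n + 1 - m) := by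
  obtain ⟨k, rfl⟩ : ∃ k, n = k + 1 := ⟨n - 1, by omega⟩
  rw [key D hx hy k]
  rw [← Finset.sum_fiberwise_of_maps_to (t := Finset.Icc 1 (k + 1)) (g := fun σ : Equiv.Perm (Fin (k + 1)) => ascents σ + 1)
    (fun σ _ => Finset.mem_Icc.mpr ⟨by simp, by simpa using Nat.succ_le_succ (ascents_le σ)⟩)
    (fun σ => (X 0 : MvPolynomial (Fin 2) ℚ) ^ (ascents σ + 1) * X 1 ^ (k + 1 - ascents σ))]
  refine Finset.sum_congr rfl (fun m hm => ?_)
  obtain ⟨hm1, hm2⟩ := Finset.mem_Icc.mp hm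
  have hconst : ∀ σ ∈ Finset.univ.filter
      (fun σ : Equiv.Perm (Fin (k + 1)) => ascents σ + 1 = m),
      (X 0 : MvPolynomial (Fin 2) ℚ) ^ (ascents σ + 1) * X 1 ^ (k + 1 - ascents σ)
        = (X 0 : MvPolynomial (Fin 2) ℚ) ^ m * X 1 ^ (k + 1 + 1 - m) := by
    intro σ hσ
    have h5 := (Finset.mem_filter.mp hσ).2
    rw [h5, show k + 1 - ascents σ = k + 1 + 1 - m from by omega]
  rw [Finset.sum_congr rfl hconst, Finset.sum_const]
  have hfil : Finset.univ.filter (fun σ : Equiv.Perm (Fin (k + 1)) => ascents σ + 1 = m)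
      = Finset.univ.filter (fun σ => ascents σ = m - 1) :=
    Finset.filter_congr (fun σ _ => by omega)
  have hcard : (Finset.univ.filter
      (fun σ : Equiv.Perm (Fin (k + 1)) => ascents σ = m - 1)).card = eulerianA (k + 1) m := by
    rw [eulerianA, Nat.card_eq_fintype_card, Fintype.card_subtype]
  rw [hfil, hcard, nsmul_eq_mul, mul_assoc]
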